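/- Under the beta model, Var(p | p̃) = γ p̃(1-p̃) + γ² p̃(1-p̃)(g*'(p̃) - 2), where g*(p̃) = p̃(1-p̃) f'(p̃)/f(p̃). -/

import Mathlib

open MeasureTheory
open Set
open scoped ENNReal

lemma aux_betaInt {a b : ℝ} (ha : -1 < a) (hb : -1 < b) :
    IntegrableOn (fun x : ℝ => x ^ a * (1 - x) ^ b) (Set.Ioo 0 1) := by
  have measexp : Measurable (fun x : ℝ => Real.exp (a * Real.log x) * Real.exp (b * Real.log (1 - x))) :=
    ((Real.measurable_log.const_mul a).exp.mul
        ((Real.measurable_log.comp (measurable_const.sub measurable_id)).const_mul b).exp)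
  have meas1 : ∀ (s : Set ℝ), (∀ᵐ x ∂(volume.restrict s), x ∈ Set.Ioo (0:ℝ) 1) →
      AEStronglyMeasurable (fun x : ℝ => x ^ a * (1 - x) ^ b) (volume.restrict s) := by
    intro s hs
    have : ∀ᵐ x ∂(volume.restrict s),
        (fun x : ℝ => Real.exp (a * Real.log x) * Real.exp (b * Real.log (1 - x))) x
          = x ^ a * (1 - x) ^ b := by
      filter_upwards [hs] with x hx'
      rw [Real.rpow_def_of_pos hx'.1, Real.rpow_def_of_pos (by linarith [hx'.2] : (0:ℝ) < 1 - x)]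
      ring_nf
    exact AEStronglyMeasurable.congr measexp.aestronglyMeasurable this
  have hne : ∀ᵐ x ∂(volume : Measure ℝ), x ≠ 1 := by
    have : {x : ℝ | ¬ x ≠ 1} = {1} := by ext x; simp
    rw [ae_iff, this]
    exact measure_singleton 1
  have h1 : IntegrableOn (fun x : ℝ => x ^ a * (1 - x) ^ b) (Set.Ioc 0 2⁻¹) := by
    have hx : IntegrableOn (fun x : ℝ => x ^ a) (Set.Ioc 0 2⁻¹) := by
      have := intervalIntegral.intervalIntegrable_rpow' (a := 0) (b := 2⁻¹) ha
      rwa [intervalIntegrable_iff_integrableOn_Ioc_of_le (by norm_num)] at this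
    refine Integrable.mono' (hx.const_mul (max ((2⁻¹:ℝ) ^ b) 1))
      (meas1 _ ?_) ?_
    · filter_upwards [ae_restrict_mem measurableSet_Ioc] with x hx
      exact ⟨hx.1, lt_of_le_of_lt hx.2 (by norm_num)⟩
    filter_upwards [ae_restrict_mem measurableSet_Ioc] with x hx
    have h0x : (0:ℝ) < x := hx.1
    have hx2 : x ≤ 2⁻¹ := hx.2
    have h1x : (2⁻¹:ℝ) ≤ 1 - x := by linarith
    have hb' : (1 - x) ^ b ≤ max ((2⁻¹:ℝ) ^ b) 1 := by
      rcases le_total b 0 with hb0 | hb0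
      · exact le_max_of_le_left (Real.rpow_le_rpow_of_nonpos (by norm_num) h1x hb0)
      · exact le_max_of_le_right (Real.rpow_le_one (by linarith) (by linarith) hb0)
    rw [Real.norm_eq_abs, abs_mul, abs_of_nonneg (Real.rpow_nonneg h0x.le a),
      abs_of_nonneg (Real.rpow_nonneg (by linarith) b)]
    calc x ^ a * (1 - x) ^ b ≤ x ^ a * max ((2⁻¹:ℝ) ^ b) 1 :=
          mul_le_mul_of_nonneg_left hb' (Real.rpow_nonneg h0x.le a)
      _ = max ((2⁻¹:ℝ) ^ b) 1 * x ^ a := by ring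
  have h2 : IntegrableOn (fun x : ℝ => x ^ a * (1 - x) ^ b) (Set.Ioc 2⁻¹ 1) := by
    have hx : IntegrableOn (fun x : ℝ => (1 - x) ^ b) (Set.Ioc 2⁻¹ 1) := by
      have h' : IntervalIntegrable (fun x : ℝ => (1 - x) ^ b) volume 2⁻¹ 1 := by
        have := (intervalIntegral.intervalIntegrable_rpow' (a := (2⁻¹:ℝ)) (b := 0) hb).comp_sub_left 1
        have e1 : (1:ℝ) - 2⁻¹ = 2⁻¹ := by norm_num
        have e2 : (1:ℝ) - 0 = 1 := by norm_num
        rwa [e1, e2] at this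
      rwa [intervalIntegrable_iff_integrableOn_Ioc_of_le (by norm_num)] at h'
    refine Integrable.mono' (hx.const_mul (max ((2⁻¹:ℝ) ^ a) 1))
      (meas1 _ ?_) ?_
    · filter_upwards [ae_restrict_mem measurableSet_Ioc, ae_restrict_of_ae hne] with x hx hx1
      exact ⟨lt_trans (by norm_num) hx.1, lt_of_le_of_ne hx.2 hx1⟩
    filter_upwards [ae_restrict_mem measurableSet_Ioc] with x hx
    have h0x : (2⁻¹:ℝ) < x := hx.1
    have hx1 : x ≤ 1 := hx.2
    have h1x : (0:ℝ) ≤ 1 - x := by linarith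
    have ha' : x ^ a ≤ max ((2⁻¹:ℝ) ^ a) 1 := by
      rcases le_total a 0 with ha0 | ha0
      · exact le_max_of_le_left (Real.rpow_le_rpow_of_nonpos (by norm_num) h0x.le ha0)
      · exact le_max_of_le_right (Real.rpow_le_one (by linarith) hx1 ha0)
    rw [Real.norm_eq_abs, abs_mul, abs_of_nonneg (Real.rpow_nonneg (by linarith : (0:ℝ) ≤ x) a),
      abs_of_nonneg (Real.rpow_nonneg h1x b)]
    exact mul_le_mul_of_nonneg_right ha' (Real.rpow_nonneg h1x b)
  exact (h1.union h2).mono_set (fun x hx => by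
    rcases le_or_gt x 2⁻¹ with hc | hc
    · exact Or.inl ⟨hx.1, hc⟩
    · exact Or.inr ⟨hc, hx.2.le⟩)

lemma aux_B_meas {γ : ℝ} (B : ℝ → ℝ)
    (hB : ∀ pr, B pr = ∫ x in Set.Ioo (0:ℝ) 1, x ^ (pr/γ - 1) * (1 - x) ^ ((1 - pr)/γ - 1)) :
    Measurable B := by
  have hBe : B = fun pr => ∫ x in Set.Ioo (0:ℝ) 1,
      Real.exp (Real.log x * (pr/γ - 1)) * Real.exp (Real.log (1 - x) * ((1 - pr)/γ - 1)) := by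
    funext pr
    rw [hB]
    apply setIntegral_congr_fun measurableSet_Ioo
    intro x hx
    show x ^ (pr/γ - 1) * (1 - x) ^ ((1 - pr)/γ - 1) = _
    rw [Real.rpow_def_of_pos hx.1, Real.rpow_def_of_pos (by linarith [hx.2] : (0:ℝ) < 1 - x)]
  rw [hBe]
  have hm : Measurable (Function.uncurry fun (pr x : ℝ) =>
      Real.exp (Real.log x * (pr/γ - 1)) * Real.exp (Real.log (1 - x) * ((1 - pr)/γ - 1))) := by
    apply Measurable.mul
    · exact ((Real.measurable_log.comp measurable_snd).mul
        ((measurable_fst.div_const γ).sub measurable_const)).exp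
    · exact ((Real.measurable_log.comp (measurable_const.sub measurable_snd)).mul
        (((measurable_const.sub measurable_fst).div_const γ).sub measurable_const)).exp
  exact (StronglyMeasurable.integral_prod_right hm.stronglyMeasurable).measurable

lemma aux_c_pos {γ : ℝ} (hγ : 0 < γ) :
    0 < ∫ x in Set.Ioo (0:ℝ) 1, x ^ (1/γ) * (1 - x) ^ (1/γ) := by
  rw [setIntegral_pos_iff_support_of_nonneg_ae]
  · have hsub : Set.Ioo (0:ℝ) 1 ⊆ Function.support (fun x : ℝ => x ^ (1/γ) * (1 - x) ^ (1/γ)) := by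
      intro x hx
      have := mul_pos (Real.rpow_pos_of_pos hx.1 (1/γ))
        (Real.rpow_pos_of_pos (by linarith [hx.2] : (0:ℝ) < 1 - x) (1/γ))
      exact ne_of_gt this
    calc (0:ℝ≥0∞) < volume (Set.Ioo (0:ℝ) 1) := by simp [Real.volume_Ioo]
      _ ≤ volume (Function.support (fun x : ℝ => x ^ (1/γ) * (1 - x) ^ (1/γ)) ∩ Set.Ioo 0 1) := by
          apply measure_mono; intro x hx; exact ⟨hsub hx, hx⟩
  · filter_upwards [ae_restrict_mem measurableSet_Ioo] with x hx
    exact mul_nonneg (Real.rpow_nonneg hx.1.le _) (Real.rpow_nonneg (by linarith [hx.2]) _)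
  · have h0 : (0:ℝ) < 1/γ := by positivity
    exact aux_betaInt (by linarith) (by linarith)

lemma aux_B_lb {γ : ℝ} (hγ : 0 < γ) {pr : ℝ} (hpr : pr ∈ Set.Ioo (0:ℝ) 1) :
    (∫ x in Set.Ioo (0:ℝ) 1, x ^ (1/γ) * (1 - x) ^ (1/γ))
      ≤ ∫ x in Set.Ioo (0:ℝ) 1, x ^ (pr/γ - 1) * (1 - x) ^ ((1 - pr)/γ - 1) := by
  have ha : (-1:ℝ) < pr/γ - 1 := by
    have : 0 < pr / γ := div_pos hpr.1 hγ
    linarith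
  have hb : (-1:ℝ) < (1 - pr)/γ - 1 := by
    have : 0 < (1 - pr) / γ := div_pos (by linarith [hpr.2]) hγ
    linarith
  have h0 : (0:ℝ) < 1/γ := by positivity
  apply setIntegral_mono_on (aux_betaInt (by linarith) (by linarith)) (aux_betaInt ha hb)
    measurableSet_Ioo
  intro x hx
  have hx1 : (0:ℝ) < 1 - x := by linarith [hx.2]
  have e1 : pr/γ - 1 ≤ 1/γ := by
    have : pr/γ ≤ 1/γ := by gcongr; exact hpr.2.le
    linarith
  have e2 : (1 - pr)/γ - 1 ≤ 1/γ := by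
    have : (1 - pr)/γ ≤ 1/γ := by gcongr; linarith [hpr.1]
    linarith
  exact mul_le_mul (Real.rpow_le_rpow_of_exponent_ge hx.1 hx.2.le e1)
    (Real.rpow_le_rpow_of_exponent_ge hx1 (by linarith [hx.1]) e2)
    (Real.rpow_nonneg hx1.le _) (Real.rpow_nonneg hx.1.le _)

lemma aux_integ {γ : ℝ} (hγ : 0 < γ) {B h P : ℝ → ℝ} {c M K : ℝ} (hc : 0 < c)
    (hBc : ∀ pr ∈ Set.Ioo (0:ℝ) 1, c ≤ B pr)
    (hh_nonneg : ∀ x, 0 ≤ h x) (hh_le : ∀ x, h x ≤ M)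
    (hh_meas : AEStronglyMeasurable h (volume.restrict (Set.Ioo (0:ℝ) 1)))
    (hBmeas : Measurable B) (hPmeas : Measurable P)
    (hK : ∀ pr ∈ Set.Ioo (0:ℝ) 1, |P pr| ≤ K)
    {t : ℝ} (ht : t ∈ Set.Ioo (0:ℝ) 1) :
    IntegrableOn (fun pr => P pr * (t ^ (pr/γ - 1) * (1 - t) ^ ((1 - pr)/γ - 1) / B pr) * h pr)
      (Set.Ioo 0 1) := by
  have ht1 : (0:ℝ) < 1 - t := by linarith [ht.2]
  have e1 : (fun pr : ℝ => t ^ (pr/γ - 1)) = fun pr => Real.exp (Real.log t * (pr/γ - 1)) :=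
    funext fun pr => Real.rpow_def_of_pos ht.1 _
  have e2 : (fun pr : ℝ => (1 - t) ^ ((1 - pr)/γ - 1))
      = fun pr => Real.exp (Real.log (1 - t) * ((1 - pr)/γ - 1)) :=
    funext fun pr => Real.rpow_def_of_pos ht1 _
  have measF : Measurable (fun pr : ℝ => t ^ (pr/γ - 1) * (1 - t) ^ ((1 - pr)/γ - 1)) := by
    have m1 : Measurable (fun pr : ℝ => t ^ (pr/γ - 1)) := by
      rw [e1]
      exact (measurable_const.mul ((measurable_id.div_const γ).sub measurable_const)).exp
    have m2 : Measurable (fun pr : ℝ => (1 - t) ^ ((1 - pr)/γ - 1)) := by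
      rw [e2]
      exact (measurable_const.mul
        (((measurable_const.sub measurable_id).div_const γ).sub measurable_const)).exp
    exact m1.mul m2
  have hmeas : AEStronglyMeasurable
      (fun pr => P pr * (t ^ (pr/γ - 1) * (1 - t) ^ ((1 - pr)/γ - 1) / B pr) * h pr)
      (volume.restrict (Set.Ioo (0:ℝ) 1)) :=
    (((hPmeas.mul (measF.div hBmeas)).aestronglyMeasurable).mul hh_meas)
  have hK0 : 0 ≤ K := le_trans (abs_nonneg _) (hK 2⁻¹ (by norm_num))
  have hM0 : 0 ≤ M := le_trans (hh_nonneg 0) (hh_le 0)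
  refine Integrable.mono' (g := fun _ => K * (t⁻¹ * (1 - t)⁻¹ / c) * M)
    (integrableOn_const measure_Ioo_lt_top.ne) hmeas ?_
  filter_upwards [ae_restrict_mem measurableSet_Ioo] with pr hpr
  have hBpos : 0 < B pr := lt_of_lt_of_le hc (hBc pr hpr)
  have hFpos : 0 < t ^ (pr/γ - 1) * (1 - t) ^ ((1 - pr)/γ - 1) :=
    mul_pos (Real.rpow_pos_of_pos ht.1 _) (Real.rpow_pos_of_pos ht1 _)
  have hFub : t ^ (pr/γ - 1) * (1 - t) ^ ((1 - pr)/γ - 1) ≤ t⁻¹ * (1 - t)⁻¹ := by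
    have hpa : (-1:ℝ) ≤ pr/γ - 1 := by
      have : 0 ≤ pr / γ := le_of_lt (div_pos hpr.1 hγ)
      linarith
    have hpb : (-1:ℝ) ≤ (1 - pr)/γ - 1 := by
      have : 0 ≤ (1 - pr) / γ := le_of_lt (div_pos (by linarith [hpr.2]) hγ)
      linarith
    have u1 : t ^ (pr/γ - 1) ≤ t ^ (-1:ℝ) :=
      Real.rpow_le_rpow_of_exponent_ge ht.1 ht.2.le hpa
    have u2 : (1 - t) ^ ((1 - pr)/γ - 1) ≤ (1 - t) ^ (-1:ℝ) :=
      Real.rpow_le_rpow_of_exponent_ge ht1 (by linarith [ht.1]) hpb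
    rw [Real.rpow_neg_one] at u1 u2
    exact mul_le_mul u1 u2 (Real.rpow_nonneg ht1.le _) (inv_nonneg.mpr ht.1.le)
  rw [Real.norm_eq_abs, abs_mul, abs_mul,
    abs_of_nonneg (le_of_lt (div_pos hFpos hBpos)), abs_of_nonneg (hh_nonneg pr)]
  have step1 : t ^ (pr/γ - 1) * (1 - t) ^ ((1 - pr)/γ - 1) / B pr ≤ t⁻¹ * (1 - t)⁻¹ / c :=
    div_le_div₀ (mul_nonneg (inv_nonneg.mpr ht.1.le) (inv_nonneg.mpr ht1.le)) hFub hc (hBc pr hpr)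
  exact mul_le_mul (mul_le_mul (hK pr hpr) step1 (le_of_lt (div_pos hFpos hBpos)) hK0)
    (hh_le pr) (hh_nonneg pr)
    (mul_nonneg hK0 (div_nonneg (mul_nonneg (inv_nonneg.mpr ht.1.le) (inv_nonneg.mpr ht1.le)) hc.le))

lemma aux_measF {γ t : ℝ} (ht : t ∈ Set.Ioo (0:ℝ) 1) :
    Measurable (fun pr : ℝ => t ^ (pr/γ - 1) * (1 - t) ^ ((1 - pr)/γ - 1)) := by
  have ht1 : (0:ℝ) < 1 - t := by linarith [ht.2]
  have e1 : (fun pr : ℝ => t ^ (pr/γ - 1)) = fun pr => Real.exp (Real.log t * (pr/γ - 1)) :=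
    funext fun pr => Real.rpow_def_of_pos ht.1 _
  have e2 : (fun pr : ℝ => (1 - t) ^ ((1 - pr)/γ - 1))
      = fun pr => Real.exp (Real.log (1 - t) * ((1 - pr)/γ - 1)) :=
    funext fun pr => Real.rpow_def_of_pos ht1 _
  have m1 : Measurable (fun pr : ℝ => t ^ (pr/γ - 1)) := by
    rw [e1]
    exact (measurable_const.mul ((measurable_id.div_const γ).sub measurable_const)).exp
  have m2 : Measurable (fun pr : ℝ => (1 - t) ^ ((1 - pr)/γ - 1)) := by
    rw [e2]
    exact (measurable_const.mul
      (((measurable_const.sub measurable_id).div_const γ).sub measurable_const)).exp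
  exact m1.mul m2

lemma aux_hasDerivAt {γ : ℝ} (hγ : 0 < γ) {B h P : ℝ → ℝ} {c M K : ℝ} (hc : 0 < c)
    (hBc : ∀ pr ∈ Set.Ioo (0:ℝ) 1, c ≤ B pr)
    (hh_nonneg : ∀ x, 0 ≤ h x) (hh_le : ∀ x, h x ≤ M)
    (hh_meas : AEStronglyMeasurable h (volume.restrict (Set.Ioo (0:ℝ) 1)))
    (hBmeas : Measurable B) (hPmeas : Measurable P)
    (hK : ∀ pr ∈ Set.Ioo (0:ℝ) 1, |P pr| ≤ K)
    {t0 : ℝ} (ht0 : t0 ∈ Set.Ioo (0:ℝ) 1) :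
    HasDerivAt (fun t => ∫ pr in Set.Ioo (0:ℝ) 1,
        P pr * (t ^ (pr/γ - 1) * (1 - t) ^ ((1 - pr)/γ - 1) / B pr) * h pr)
      (∫ pr in Set.Ioo (0:ℝ) 1,
        P pr * (((pr/γ - 1)/t0 - ((1 - pr)/γ - 1)/(1 - t0))
          * (t0 ^ (pr/γ - 1) * (1 - t0) ^ ((1 - pr)/γ - 1)) / B pr) * h pr) t0 := by
  have ht01 : (0:ℝ) < 1 - t0 := by linarith [ht0.2]
  set ε : ℝ := min t0 (1 - t0) / 2 with hε
  have hε_pos : 0 < ε := by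
    have := lt_min ht0.1 ht01
    positivity
  have hεa : ε ≤ t0 / 2 := by
    have := min_le_left t0 (1 - t0); rw [hε]; linarith
  have hεb : ε ≤ (1 - t0) / 2 := by
    have := min_le_right t0 (1 - t0); rw [hε]; linarith
  have hball : ∀ t ∈ Metric.ball t0 ε, t0/2 ≤ t ∧ (1 - t0)/2 ≤ 1 - t ∧ t ∈ Set.Ioo (0:ℝ) 1 := by
    intro t htb
    rw [Metric.mem_ball, Real.dist_eq] at htb
    have h1 := abs_lt.1 htb
    refine ⟨by linarith [h1.1], by linarith [h1.2], ⟨by linarith [h1.1, ht0.1], by linarith [h1.2]⟩⟩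
  have hK0 : 0 ≤ K := le_trans (abs_nonneg _) (hK 2⁻¹ (by norm_num))
  have hM0 : 0 ≤ M := le_trans (hh_nonneg 0) (hh_le 0)
  set Dm : ℝ := (1/γ + 1)/(t0/2) + (1/γ + 1)/((1 - t0)/2) with hDm
  set Fm : ℝ := (t0/2)⁻¹ * ((1 - t0)/2)⁻¹ with hFm
  have ht02 : (0:ℝ) < t0/2 := by linarith [ht0.1]
  have ht012 : (0:ℝ) < (1 - t0)/2 := by linarith
  have hg1 : (0:ℝ) < 1/γ + 1 := by positivity
  have hDm0 : 0 ≤ Dm := by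
    rw [hDm]; exact le_of_lt (add_pos (div_pos hg1 ht02) (div_pos hg1 ht012))
  have hFm0 : 0 ≤ Fm := by
    rw [hFm]; exact le_of_lt (mul_pos (inv_pos.2 ht02) (inv_pos.2 ht012))
  have key := hasDerivAt_integral_of_dominated_loc_of_deriv_le (μ := volume.restrict (Set.Ioo (0:ℝ) 1))
    (F := fun t pr => P pr * (t ^ (pr/γ - 1) * (1 - t) ^ ((1 - pr)/γ - 1) / B pr) * h pr)
    (F' := fun t pr => P pr * (((pr/γ - 1)/t - ((1 - pr)/γ - 1)/(1 - t))
          * (t ^ (pr/γ - 1) * (1 - t) ^ ((1 - pr)/γ - 1)) / B pr) * h pr)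
    (x₀ := t0) (bound := fun _ => K * (Dm * Fm / c) * M) (Metric.ball_mem_nhds t0 hε_pos) ?_ ?_ ?_ ?_ ?_ ?_
  · exact key.2
  · -- eventual measurability
    filter_upwards [isOpen_Ioo.eventually_mem ht0] with t ht
    exact (aux_integ hγ hc hBc hh_nonneg hh_le hh_meas hBmeas hPmeas hK ht).aestronglyMeasurable
  · exact aux_integ hγ hc hBc hh_nonneg hh_le hh_meas hBmeas hPmeas hK ht0
  · -- measurability of F' t0
    have measD : Measurable (fun pr : ℝ => (pr/γ - 1)/t0 - ((1 - pr)/γ - 1)/(1 - t0)) :=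
      (((measurable_id.div_const γ).sub measurable_const).div_const t0).sub
        ((((measurable_const.sub measurable_id).div_const γ).sub measurable_const).div_const (1 - t0))
    exact ((hPmeas.mul ((measD.mul (aux_measF ht0)).div hBmeas)).aestronglyMeasurable).mul hh_meas
  · -- bound
    filter_upwards [ae_restrict_mem measurableSet_Ioo] with pr hpr
    intro t htb
    obtain ⟨hta, htb', ht⟩ := hball t htb
    have ht1 : (0:ℝ) < 1 - t := by linarith [ht.2]
    have hBpos : 0 < B pr := lt_of_lt_of_le hc (hBc pr hpr)
    have hFpos : 0 < t ^ (pr/γ - 1) * (1 - t) ^ ((1 - pr)/γ - 1) :=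
      mul_pos (Real.rpow_pos_of_pos ht.1 _) (Real.rpow_pos_of_pos ht1 _)
    have hFub : t ^ (pr/γ - 1) * (1 - t) ^ ((1 - pr)/γ - 1) ≤ Fm := by
      have hpa : (-1:ℝ) ≤ pr/γ - 1 := by
        have : 0 ≤ pr / γ := le_of_lt (div_pos hpr.1 hγ); linarith
      have hpb : (-1:ℝ) ≤ (1 - pr)/γ - 1 := by
        have : 0 ≤ (1 - pr) / γ := le_of_lt (div_pos (by linarith [hpr.2]) hγ); linarith
      have u1 : t ^ (pr/γ - 1) ≤ t ^ (-1:ℝ) :=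
        Real.rpow_le_rpow_of_exponent_ge ht.1 ht.2.le hpa
      have u2 : (1 - t) ^ ((1 - pr)/γ - 1) ≤ (1 - t) ^ (-1:ℝ) :=
        Real.rpow_le_rpow_of_exponent_ge ht1 (by linarith [ht.1]) hpb
      rw [Real.rpow_neg_one] at u1 u2
      have u3 : t⁻¹ ≤ (t0/2)⁻¹ := inv_anti₀ ht02 hta
      have u4 : (1 - t)⁻¹ ≤ ((1 - t0)/2)⁻¹ := inv_anti₀ ht012 htb'
      rw [hFm]
      calc t ^ (pr/γ - 1) * (1 - t) ^ ((1 - pr)/γ - 1) ≤ t⁻¹ * (1 - t)⁻¹ :=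
            mul_le_mul u1 u2 (Real.rpow_nonneg ht1.le _) (inv_nonneg.mpr ht.1.le)
        _ ≤ (t0/2)⁻¹ * ((1 - t0)/2)⁻¹ :=
            mul_le_mul u3 u4 (inv_nonneg.mpr ht1.le) (inv_nonneg.mpr ht02.le)
    have hDub : |(pr/γ - 1)/t - ((1 - pr)/γ - 1)/(1 - t)| ≤ Dm := by
      have n1 : |pr/γ - 1| ≤ 1/γ + 1 := by
        rw [abs_le]
        have h1 : 0 < pr/γ := div_pos hpr.1 hγ
        have h2 : pr/γ ≤ 1/γ := by gcongr; exact hpr.2.le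
        have h3 : 0 < 1/γ := by positivity
        constructor <;> linarith
      have n2 : |(1 - pr)/γ - 1| ≤ 1/γ + 1 := by
        rw [abs_le]
        have h1 : 0 < (1 - pr)/γ := div_pos (by linarith [hpr.2]) hγ
        have h2 : (1 - pr)/γ ≤ 1/γ := by gcongr; linarith [hpr.1]
        have h3 : 0 < 1/γ := by positivity
        constructor <;> linarith
      calc |(pr/γ - 1)/t - ((1 - pr)/γ - 1)/(1 - t)|
          ≤ |(pr/γ - 1)/t| + |((1 - pr)/γ - 1)/(1 - t)| := abs_sub _ _
        _ = |pr/γ - 1|/t + |(1 - pr)/γ - 1|/(1 - t) := by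
            rw [abs_div, abs_div, abs_of_pos ht.1, abs_of_pos ht1]
        _ ≤ (1/γ + 1)/(t0/2) + (1/γ + 1)/((1 - t0)/2) :=
            add_le_add (div_le_div₀ hg1.le n1 ht02 hta) (div_le_div₀ hg1.le n2 ht012 htb')
        _ = Dm := hDm.symm
    rw [Real.norm_eq_abs, abs_mul, abs_mul, abs_of_nonneg (hh_nonneg pr), abs_div,
      abs_of_pos hBpos, abs_mul, abs_of_pos hFpos]
    have step1 : |(pr/γ - 1)/t - ((1 - pr)/γ - 1)/(1 - t)|
          * (t ^ (pr/γ - 1) * (1 - t) ^ ((1 - pr)/γ - 1)) / B pr ≤ Dm * Fm / c :=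
      div_le_div₀ (by positivity)
        (mul_le_mul hDub hFub hFpos.le hDm0) hc (hBc pr hpr)
    exact mul_le_mul (mul_le_mul (hK pr hpr) step1
        (div_nonneg (mul_nonneg (abs_nonneg _) hFpos.le) hBpos.le) hK0)
      (hh_le pr) (hh_nonneg pr) (mul_nonneg hK0 (div_nonneg (mul_nonneg hDm0 hFm0) hc.le))
  · -- integrable bound
    exact integrableOn_const measure_Ioo_lt_top.ne
  · -- differentiability
    filter_upwards [ae_restrict_mem measurableSet_Ioo] with pr hpr
    intro t htb
    obtain ⟨-, -, ht⟩ := hball t htb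
    have ht1 : (0:ℝ) < 1 - t := by linarith [ht.2]
    have hG1 : HasDerivAt (fun t : ℝ => t ^ (pr/γ - 1))
        ((pr/γ - 1) * t ^ (pr/γ - 1 - 1)) t :=
      Real.hasDerivAt_rpow_const (Or.inl (ne_of_gt ht.1))
    have hsub : HasDerivAt (fun t : ℝ => 1 - t) (-1) t := by
      simpa using (hasDerivAt_id t).const_sub 1
    have hG2 : HasDerivAt (fun t : ℝ => (1 - t) ^ ((1 - pr)/γ - 1))
        (((1 - pr)/γ - 1) * (1 - t) ^ ((1 - pr)/γ - 1 - 1) * (-1)) t := by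
      exact (Real.hasDerivAt_rpow_const (x := 1 - t) (p := (1 - pr)/γ - 1)
        (Or.inl (ne_of_gt ht1))).comp t hsub
    have hG := hG1.mul hG2
    have hF := ((hG.div_const (B pr)).const_mul (P pr)).mul_const (h pr)
    refine hF.congr_deriv ?_
    have e1 : t ^ (pr/γ - 1 - 1) = t ^ (pr/γ - 1) / t :=
      Real.rpow_sub_one (ne_of_gt ht.1) _
    have e2 : (1 - t) ^ ((1 - pr)/γ - 1 - 1) = (1 - t) ^ ((1 - pr)/γ - 1) / (1 - t) :=
      Real.rpow_sub_one (ne_of_gt ht1) _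
    rw [e1, e2]
    field_simp
    ring

lemma aux_rearrange {γ : ℝ} (hγ : 0 < γ) {B h P : ℝ → ℝ} {c M K : ℝ} (hc : 0 < c)
    (hBc : ∀ pr ∈ Set.Ioo (0:ℝ) 1, c ≤ B pr)
    (hh_nonneg : ∀ x, 0 ≤ h x) (hh_le : ∀ x, h x ≤ M)
    (hh_meas : AEStronglyMeasurable h (volume.restrict (Set.Ioo (0:ℝ) 1)))
    (hBmeas : Measurable B) (hPmeas : Measurable P)
    (hK : ∀ pr ∈ Set.Ioo (0:ℝ) 1, |P pr| ≤ K)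
    {t : ℝ} (ht : t ∈ Set.Ioo (0:ℝ) 1) :
    t * (1 - t) * ∫ pr in Set.Ioo (0:ℝ) 1,
        P pr * (((pr/γ - 1)/t - ((1 - pr)/γ - 1)/(1 - t))
          * (t ^ (pr/γ - 1) * (1 - t) ^ ((1 - pr)/γ - 1)) / B pr) * h pr
      = (1/γ) * (∫ pr in Set.Ioo (0:ℝ) 1,
          (pr * P pr) * (t ^ (pr/γ - 1) * (1 - t) ^ ((1 - pr)/γ - 1) / B pr) * h pr)
        + (2*t - 1 - t/γ) * ∫ pr in Set.Ioo (0:ℝ) 1,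
          P pr * (t ^ (pr/γ - 1) * (1 - t) ^ ((1 - pr)/γ - 1) / B pr) * h pr := by
  have ht1 : (0:ℝ) < 1 - t := by linarith [ht.2]
  have hK0 : 0 ≤ K := le_trans (abs_nonneg _) (hK 2⁻¹ (by norm_num))
  have h2 : IntegrableOn
      (fun pr => P pr * (t ^ (pr/γ - 1) * (1 - t) ^ ((1 - pr)/γ - 1) / B pr) * h pr)
      (Set.Ioo 0 1) := aux_integ hγ hc hBc hh_nonneg hh_le hh_meas hBmeas hPmeas hK ht
  have h1 : IntegrableOn
      (fun pr => (pr * P pr) * (t ^ (pr/γ - 1) * (1 - t) ^ ((1 - pr)/γ - 1) / B pr) * h pr)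
      (Set.Ioo 0 1) := by
    refine aux_integ hγ hc hBc hh_nonneg hh_le hh_meas hBmeas
      (measurable_id.mul hPmeas) (K := K) ?_ ht
    intro pr hpr
    show |pr * P pr| ≤ K
    rw [abs_mul]
    calc |pr| * |P pr| ≤ 1 * K :=
          mul_le_mul (abs_le.2 ⟨by linarith [hpr.1], hpr.2.le⟩) (hK pr hpr) (abs_nonneg _)
            zero_le_one
      _ = K := one_mul K
  calc t * (1 - t) * ∫ pr in Set.Ioo (0:ℝ) 1,
        P pr * (((pr/γ - 1)/t - ((1 - pr)/γ - 1)/(1 - t))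
          * (t ^ (pr/γ - 1) * (1 - t) ^ ((1 - pr)/γ - 1)) / B pr) * h pr
      = ∫ pr in Set.Ioo (0:ℝ) 1, t * (1 - t) *
          (P pr * (((pr/γ - 1)/t - ((1 - pr)/γ - 1)/(1 - t))
            * (t ^ (pr/γ - 1) * (1 - t) ^ ((1 - pr)/γ - 1)) / B pr) * h pr) :=
        (integral_const_mul _ _).symm
    _ = ∫ pr in Set.Ioo (0:ℝ) 1,
          ((1/γ) * ((pr * P pr) * (t ^ (pr/γ - 1) * (1 - t) ^ ((1 - pr)/γ - 1) / B pr) * h pr)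
           + (2*t - 1 - t/γ) *
              (P pr * (t ^ (pr/γ - 1) * (1 - t) ^ ((1 - pr)/γ - 1) / B pr) * h pr)) := by
        apply setIntegral_congr_fun measurableSet_Ioo
        intro pr hpr
        have hBpos : (0:ℝ) < B pr := lt_of_lt_of_le hc (hBc pr hpr)
        have hγ' : γ ≠ 0 := ne_of_gt hγ
        have htne : t ≠ 0 := ne_of_gt ht.1
        have ht1ne : (1:ℝ) - t ≠ 0 := ne_of_gt ht1
        have hBne : B pr ≠ 0 := ne_of_gt hBpos
        field_simp
        ring
    _ = (1/γ) * (∫ pr in Set.Ioo (0:ℝ) 1,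
          (pr * P pr) * (t ^ (pr/γ - 1) * (1 - t) ^ ((1 - pr)/γ - 1) / B pr) * h pr)
        + (2*t - 1 - t/γ) * ∫ pr in Set.Ioo (0:ℝ) 1,
          P pr * (t ^ (pr/γ - 1) * (1 - t) ^ ((1 - pr)/γ - 1) / B pr) * h pr := by
        rw [integral_add (h1.const_mul _) (h2.const_mul _), integral_const_mul, integral_const_mul]

/-- Tweedie variance formula under the beta model:
`Var(p | p̃) = γ p̃(1-p̃) + γ² p̃(1-p̃)(g*'(p̃) - 2)` where
`g*(p̃) = p̃(1-p̃) f'(p̃)/f(p̃)`. -/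
theorem tweedie_variance (γ : ℝ) (hγ : 0 < γ) (h : ℝ → ℝ)
    (hh_nonneg : ∀ x, 0 ≤ h x) (hh_bdd : ∃ M, ∀ x, h x ≤ M)
    (hh_density : ∫ x in Set.Icc (0 : ℝ) 1, h x = 1)
    (B : ℝ → ℝ)
    (hB : ∀ pr, B pr = ∫ x in Set.Ioo (0 : ℝ) 1,
      x ^ (pr / γ - 1) * (1 - x) ^ ((1 - pr) / γ - 1))
    (f : ℝ → ℝ)
    (hf : ∀ t, f t = ∫ pr in Set.Ioo (0 : ℝ) 1,
      t ^ (pr / γ - 1) * (1 - t) ^ ((1 - pr) / γ - 1) / B pr * h pr)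
    (g : ℝ → ℝ)
    (hg : ∀ t, g t = t * (1 - t) * deriv f t / f t) :
    ∀ t ∈ Set.Ioo (0 : ℝ) 1, f t ≠ 0 →
      (∫ pr in Set.Ioo (0 : ℝ) 1,
          pr ^ 2 * (t ^ (pr / γ - 1) * (1 - t) ^ ((1 - pr) / γ - 1) / B pr)
            * h pr) / f t
        - ((∫ pr in Set.Ioo (0 : ℝ) 1,
            pr * (t ^ (pr / γ - 1) * (1 - t) ^ ((1 - pr) / γ - 1) / B pr)
              * h pr) / f t) ^ 2
      = γ * (t * (1 - t)) + γ ^ 2 * (t * (1 - t)) * (deriv g t - 2) := by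
  intro t ht hft
  obtain ⟨M, hh_le⟩ := hh_bdd
  have hIntIcc : IntegrableOn h (Set.Icc (0:ℝ) 1) := by
    by_contra hni
    rw [integral_undef hni] at hh_density
    norm_num at hh_density
  have hh_meas : AEStronglyMeasurable h (volume.restrict (Set.Ioo (0:ℝ) 1)) :=
    hIntIcc.aestronglyMeasurable.mono_measure
      (Measure.restrict_mono Set.Ioo_subset_Icc_self le_rfl)
  have hBmeas : Measurable B := aux_B_meas B hB
  have hc : 0 < ∫ x in Set.Ioo (0:ℝ) 1, x ^ (1/γ) * (1 - x) ^ (1/γ) := aux_c_pos hγ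
  have hBc : ∀ pr ∈ Set.Ioo (0:ℝ) 1,
      (∫ x in Set.Ioo (0:ℝ) 1, x ^ (1/γ) * (1 - x) ^ (1/γ)) ≤ B pr := fun pr hpr => by
    rw [hB pr]; exact aux_B_lb hγ hpr
  -- positivity of f on Ioo
  have hIntIoo : IntegrableOn h (Set.Ioo (0:ℝ) 1) := hIntIcc.mono_set Set.Ioo_subset_Icc_self
  have hIoo1 : (0:ℝ) < ∫ x in Set.Ioo (0:ℝ) 1, h x := by
    rw [← integral_Icc_eq_integral_Ioo, hh_density]; norm_num
  have hsupph : 0 < volume (Function.support h ∩ Set.Ioo 0 1) :=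
    (setIntegral_pos_iff_support_of_nonneg_ae
      (Filter.Eventually.of_forall (fun x => hh_nonneg x)) hIntIoo).mp hIoo1
  have hfpos : ∀ s ∈ Set.Ioo (0:ℝ) 1, 0 < f s := by
    intro s hs
    have hs1 : (0:ℝ) < 1 - s := by linarith [hs.2]
    have hIW : IntegrableOn
        (fun pr => s ^ (pr/γ - 1) * (1 - s) ^ ((1 - pr)/γ - 1) / B pr * h pr)
        (Set.Ioo 0 1) := by
      have := aux_integ (P := fun _ => (1:ℝ)) hγ hc hBc hh_nonneg hh_le hh_meas hBmeas
        measurable_const (K := 1) (fun pr _ => by norm_num) hs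
      simpa only [one_mul] using this
    rw [hf s]
    refine (setIntegral_pos_iff_support_of_nonneg_ae ?_ hIW).mpr ?_
    · filter_upwards [ae_restrict_mem measurableSet_Ioo] with pr hpr
      have hBpos := lt_of_lt_of_le hc (hBc pr hpr)
      exact mul_nonneg (le_of_lt (div_pos (mul_pos (Real.rpow_pos_of_pos hs.1 _)
        (Real.rpow_pos_of_pos hs1 _)) hBpos)) (hh_nonneg pr)
    · refine lt_of_lt_of_le hsupph (measure_mono ?_)
      rintro pr ⟨hpr1, hpr2⟩
      refine ⟨?_, hpr2⟩
      have hBpos := lt_of_lt_of_le hc (hBc pr hpr2)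
      exact mul_ne_zero (ne_of_gt (div_pos (mul_pos (Real.rpow_pos_of_pos hs.1 _)
        (Real.rpow_pos_of_pos hs1 _)) hBpos)) hpr1
  -- moment functions
  set m1 : ℝ → ℝ := fun s => ∫ pr in Set.Ioo (0:ℝ) 1,
    pr * (s ^ (pr/γ - 1) * (1 - s) ^ ((1 - pr)/γ - 1) / B pr) * h pr with hm1def
  set m2 : ℝ → ℝ := fun s => ∫ pr in Set.Ioo (0:ℝ) 1,
    pr ^ 2 * (s ^ (pr/γ - 1) * (1 - s) ^ ((1 - pr)/γ - 1) / B pr) * h pr with hm2def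
  -- derivative of f everywhere on Ioo
  have hfd : ∀ s ∈ Set.Ioo (0:ℝ) 1, HasDerivAt f (∫ pr in Set.Ioo (0:ℝ) 1,
      ((pr/γ - 1)/s - ((1 - pr)/γ - 1)/(1 - s))
        * (s ^ (pr/γ - 1) * (1 - s) ^ ((1 - pr)/γ - 1)) / B pr * h pr) s := by
    intro s hs
    have hfun : (fun u => ∫ pr in Set.Ioo (0:ℝ) 1,
        (1:ℝ) * (u ^ (pr/γ - 1) * (1 - u) ^ ((1 - pr)/γ - 1) / B pr) * h pr) = f := by
      funext u; rw [hf u]; simp only [one_mul]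
    have key := aux_hasDerivAt (P := fun _ => (1:ℝ)) hγ hc hBc hh_nonneg hh_le hh_meas hBmeas
      measurable_const (K := 1) (fun pr _ => by norm_num) hs
    rw [hfun] at key
    simpa only [one_mul] using key
  -- E1 : rearrangement for f
  have hE1 : ∀ s ∈ Set.Ioo (0:ℝ) 1,
      s * (1 - s) * (∫ pr in Set.Ioo (0:ℝ) 1,
        ((pr/γ - 1)/s - ((1 - pr)/γ - 1)/(1 - s))
          * (s ^ (pr/γ - 1) * (1 - s) ^ ((1 - pr)/γ - 1)) / B pr * h pr)
      = (1/γ) * m1 s + (2*s - 1 - s/γ) * f s := by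
    intro s hs
    have key := aux_rearrange (P := fun _ => (1:ℝ)) hγ hc hBc hh_nonneg hh_le hh_meas hBmeas
      measurable_const (K := 1) (fun pr _ => by norm_num) hs
    simp only [one_mul, mul_one] at key
    rw [← hf s] at key
    exact key
  -- derivative of m1 at t
  have hm1d : HasDerivAt m1 (∫ pr in Set.Ioo (0:ℝ) 1,
      pr * (((pr/γ - 1)/t - ((1 - pr)/γ - 1)/(1 - t))
        * (t ^ (pr/γ - 1) * (1 - t) ^ ((1 - pr)/γ - 1)) / B pr) * h pr) t := by
    have key := aux_hasDerivAt (P := fun pr => pr) hγ hc hBc hh_nonneg hh_le hh_meas hBmeas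
      measurable_id (K := 1) (fun pr hpr => abs_le.2 ⟨by linarith [hpr.1], hpr.2.le⟩) ht
    exact key
  -- E2 at t
  have hE2 : t * (1 - t) * (∫ pr in Set.Ioo (0:ℝ) 1,
      pr * (((pr/γ - 1)/t - ((1 - pr)/γ - 1)/(1 - t))
        * (t ^ (pr/γ - 1) * (1 - t) ^ ((1 - pr)/γ - 1)) / B pr) * h pr)
      = (1/γ) * m2 t + (2*t - 1 - t/γ) * m1 t := by
    have key := aux_rearrange (P := fun pr => pr) hγ hc hBc hh_nonneg hh_le hh_meas hBmeas
      measurable_id (K := 1) (fun pr hpr => abs_le.2 ⟨by linarith [hpr.1], hpr.2.le⟩) ht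
    have e : (∫ pr in Set.Ioo (0:ℝ) 1,
        (pr * pr) * (t ^ (pr/γ - 1) * (1 - t) ^ ((1 - pr)/γ - 1) / B pr) * h pr)
        = ∫ pr in Set.Ioo (0:ℝ) 1,
          pr ^ 2 * (t ^ (pr/γ - 1) * (1 - t) ^ ((1 - pr)/γ - 1) / B pr) * h pr := by
      apply setIntegral_congr_fun measurableSet_Ioo
      intro pr _
      ring
    rw [e] at key
    exact key
  -- formula for g on Ioo
  have hgev : ∀ s ∈ Set.Ioo (0:ℝ) 1, g s = (1/γ) * (m1 s / f s) + (2*s - 1 - s/γ) := by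
    intro s hs
    have hfs : f s ≠ 0 := (hfpos s hs).ne'
    have hd := hfd s hs
    rw [hg s, hd.deriv]
    have e1 := hE1 s hs
    rw [e1]
    field_simp
  -- deriv g at t
  have hGd : HasDerivAt (fun s => (1/γ) * (m1 s / f s) + (2*s - 1 - s/γ))
      ((1/γ) * (((∫ pr in Set.Ioo (0:ℝ) 1,
          pr * (((pr/γ - 1)/t - ((1 - pr)/γ - 1)/(1 - t))
            * (t ^ (pr/γ - 1) * (1 - t) ^ ((1 - pr)/γ - 1)) / B pr) * h pr) * f t
          - m1 t * (∫ pr in Set.Ioo (0:ℝ) 1,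
          ((pr/γ - 1)/t - ((1 - pr)/γ - 1)/(1 - t))
            * (t ^ (pr/γ - 1) * (1 - t) ^ ((1 - pr)/γ - 1)) / B pr * h pr)) / f t ^ 2)
        + (2 - 1/γ)) t := by
    have h1 := (hm1d.div (hfd t ht) (hfpos t ht).ne').const_mul (1/γ)
    have h2 : HasDerivAt (fun s : ℝ => 2*s - 1 - s/γ) (2 - 1/γ) t := by
      have := (((hasDerivAt_id t).const_mul (2:ℝ)).sub_const (1:ℝ)).sub
        ((hasDerivAt_id t).div_const γ)
      simpa [Pi.sub_def] using this
    exact h1.add h2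
  have hDg : deriv g t = (1/γ) * (((∫ pr in Set.Ioo (0:ℝ) 1,
          pr * (((pr/γ - 1)/t - ((1 - pr)/γ - 1)/(1 - t))
            * (t ^ (pr/γ - 1) * (1 - t) ^ ((1 - pr)/γ - 1)) / B pr) * h pr) * f t
          - m1 t * (∫ pr in Set.Ioo (0:ℝ) 1,
          ((pr/γ - 1)/t - ((1 - pr)/γ - 1)/(1 - t))
            * (t ^ (pr/γ - 1) * (1 - t) ^ ((1 - pr)/γ - 1)) / B pr * h pr)) / f t ^ 2)
        + (2 - 1/γ) := by
    have hev : g =ᶠ[nhds t] (fun s => (1/γ) * (m1 s / f s) + (2*s - 1 - s/γ)) := by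
      filter_upwards [isOpen_Ioo.eventually_mem ht] with s hs
      exact hgev s hs
    rw [Filter.EventuallyEq.deriv_eq hev]
    exact hGd.deriv
  show m2 t / f t - (m1 t / f t) ^ 2
      = γ * (t * (1 - t)) + γ ^ 2 * (t * (1 - t)) * (deriv g t - 2)
  rw [hDg]
  have e1 := hE1 t ht
  have e2 := hE2
  set D0 := ∫ pr in Set.Ioo (0:ℝ) 1,
      ((pr/γ - 1)/t - ((1 - pr)/γ - 1)/(1 - t))
        * (t ^ (pr/γ - 1) * (1 - t) ^ ((1 - pr)/γ - 1)) / B pr * h pr with hD0def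
  set D1 := ∫ pr in Set.Ioo (0:ℝ) 1,
      pr * (((pr/γ - 1)/t - ((1 - pr)/γ - 1)/(1 - t))
        * (t ^ (pr/γ - 1) * (1 - t) ^ ((1 - pr)/γ - 1)) / B pr) * h pr with hD1def
  have hγ' : γ ≠ 0 := ne_of_gt hγ
  have htne : t ≠ 0 := ne_of_gt ht.1
  have ht1ne : (1:ℝ) - t ≠ 0 := sub_ne_zero_of_ne (ne_of_gt ht.2)
  field_simp at e1 e2 ⊢
  linear_combination m1 t * e1 - f t * e2
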